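/- For every closed λ-term M and natural number n, if the tree term graph 𝔾(⟨M⟩) rewrites in n steps of the graph rewrite system corresponding to Φ to a term graph G, then the number of vertices of G is at most (n+1)·|M|, where |M| is the size of M. -/

import Mathlib

/-- Untyped λ-terms over variables drawn from ℕ (a denumerable totally ordered set). -/
inductive Lam : Type
  | var : ℕ → Lam
  | lam : ℕ → Lam → Lam
  | app : Lam → Lam → Lam
deriving DecidableEq, Repr

namespace Lam

/-- Capture-permitting substitution M{N/x} (adequate for weak reduction of closed terms). -/
def subst : Lam → ℕ → Lam → Lam
  | var y, x, N => if y = x then N else var y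
  | lam y M, x, N => if y = x then lam y M else lam y (subst M x N)
  | app M₁ M₂, x, N => app (subst M₁ x N) (subst M₂ x N)

/-- Simultaneous substitution along a partial assignment of terms to variables. -/
def msubst : Lam → (ℕ → Option Lam) → Lam
  | var y, σ => (σ y).getD (var y)
  | lam y M, σ => lam y (msubst M (fun z => if z = y then none else σ z))
  | app M₁ M₂, σ => app (msubst M₁ σ) (msubst M₂ σ)

/-- The assignment sending each `xᵢ` to `tᵢ` (first match wins). -/
def substOf (xs : List ℕ) (ts : List Lam) : ℕ → Option Lam :=
  fun y => (xs.zip ts).lookup y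

/-- Values: variables and abstractions. -/
def IsValue : Lam → Prop
  | var _ => True
  | lam _ _ => True
  | app _ _ => False

/-- Weak call-by-value reduction. -/
inductive CbvStep : Lam → Lam → Prop
  | beta {x : ℕ} {M V : Lam} : IsValue V → CbvStep (app (lam x M) V) (subst M x V)
  | appL {M N L : Lam} : CbvStep M N → CbvStep (app M L) (app N L)
  | appR {M N L : Lam} : CbvStep M N → CbvStep (app L M) (app L N)

/-- A →v-normal form. -/
def CbvNormal (M : Lam) : Prop := ¬ ∃ N, CbvStep M N

/-- Free variables, as a finite set. -/
def fv : Lam → Finset ℕ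
  | var x => {x}
  | lam x M => fv M \ {x}
  | app M N => fv M ∪ fv N

/-- The sequence (without repetitions, in variable order) of free variables of `M`. -/
def fvList (M : Lam) : List ℕ := (fv M).sort (· ≤ ·)

def Closed (M : Lam) : Prop := fv M = ∅

/-- The size |M| of a λ-term. -/
def size : Lam → ℕ
  | var _ => 1
  | lam _ M => size M + 1
  | app M N => size M + size N + 1

end Lam

/-- `NSteps r n a b`: `a` reduces to `b` in exactly `n` `r`-steps. -/
def NSteps {α : Type*} (r : α → α → Prop) : ℕ → α → α → Prop
  | 0 => fun a b => a = b
  | n + 1 => fun a c => ∃ b, r a b ∧ NSteps r n b c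

/-- First-order terms over a signature with constructors `C` and function symbols `F`,
with variables drawn from ℕ. -/
inductive GTerm (C F : Type) : Type
  | var : ℕ → GTerm C F
  | con : C → List (GTerm C F) → GTerm C F
  | fn : F → List (GTerm C F) → GTerm C F

namespace GTerm

variable {C F : Type}

/-- Constructor terms: built only from constructors. -/
inductive IsConTerm : GTerm C F → Prop
  | con {c ts} : (∀ t ∈ ts, IsConTerm t) → IsConTerm (con c ts)

/-- Patterns: built from constructors and variables. -/
inductive IsPattern : GTerm C F → Prop
  | var {x} : IsPattern (var x)
  | con {c ts} : (∀ t ∈ ts, IsPattern t) → IsPattern (con c ts)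

/-- Arity discipline: every symbol is applied to as many arguments as its arity. -/
inductive WFT (arc : C → ℕ) (arf : F → ℕ) : GTerm C F → Prop
  | var {x} : WFT arc arf (var x)
  | con {c ts} : ts.length = arc c → (∀ t ∈ ts, WFT arc arf t) → WFT arc arf (con c ts)
  | fn {f ts} : ts.length = arf f → (∀ t ∈ ts, WFT arc arf t) → WFT arc arf (fn f ts)

/-- The list of variable occurrences of a term, in left-to-right order. -/
def varsL : GTerm C F → List ℕ
  | var x => [x]
  | con _ ts => ts.attach.flatMap (fun t => varsL t.1)
  | fn _ ts => ts.attach.flatMap (fun t => varsL t.1)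
decreasing_by
  all_goals simp_wf
  all_goals have := List.sizeOf_lt_of_mem t.2
  all_goals omega

/-- Substitution of terms for variables. -/
def gsubst (σ : ℕ → Option (GTerm C F)) : GTerm C F → GTerm C F
  | var y => (σ y).getD (var y)
  | con c ts => con c (ts.attach.map (fun t => gsubst σ t.1))
  | fn f ts => fn f (ts.attach.map (fun t => gsubst σ t.1))
decreasing_by
  all_goals simp_wf
  all_goals have := List.sizeOf_lt_of_mem t.2
  all_goals omega

end GTerm

/-- A constructor rewrite rule f(p₁,…,pₙ) → rhs. -/
structure GRule (C F : Type) where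
  f : F
  args : List (GTerm C F)
  rhs : GTerm C F

/-- Well-formedness of a rule: the lhs arguments are patterns respecting the
arities, the lhs is linear, and the rhs is a well-formed term all of whose
variables occur in the lhs. -/
def GRule.WF {C F : Type} (arc : C → ℕ) (arf : F → ℕ) (r : GRule C F) : Prop :=
  (∀ p ∈ r.args, GTerm.IsPattern p) ∧
  r.args.length = arf r.f ∧
  (∀ p ∈ r.args, GTerm.WFT arc arf p) ∧
  (r.args.flatMap GTerm.varsL).Nodup ∧
  GTerm.WFT arc arf r.rhs ∧
  (∀ x ∈ r.rhs.varsL, x ∈ r.args.flatMap GTerm.varsL)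

/-- Non-overlapping rules: the left-hand sides of distinct rules cannot be
instantiated (by constructor terms) to a common term. -/
def NonOverlapping {C F : Type} (Rs : Set (GRule C F)) : Prop :=
  ∀ r₁ ∈ Rs, ∀ r₂ ∈ Rs, r₁ ≠ r₂ → r₁.f = r₂.f →
    ¬ ∃ σ τ : ℕ → Option (GTerm C F),
        (∀ x t, σ x = some t → GTerm.IsConTerm t) ∧
        (∀ x t, τ x = some t → GTerm.IsConTerm t) ∧
        r₁.args.map (GTerm.gsubst σ) = r₂.args.map (GTerm.gsubst τ)

/-- An orthogonal constructor rewrite system. -/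
def Orthogonal {C F : Type} (arc : C → ℕ) (arf : F → ℕ) (Rs : Set (GRule C F)) : Prop :=
  (∀ r ∈ Rs, GRule.WF arc arf r) ∧ NonOverlapping Rs

/-- One-step (call-by-value) rewriting: a rule instantiated by constructor terms
fires, closed under arbitrary contexts. -/
inductive XStep {C F : Type} (Rs : Set (GRule C F)) : GTerm C F → GTerm C F → Prop
  | root {r : GRule C F} {σ : ℕ → Option (GTerm C F)} :
      r ∈ Rs → (∀ x t, σ x = some t → GTerm.IsConTerm t) →
      XStep Rs (GTerm.fn r.f (r.args.map (GTerm.gsubst σ))) (GTerm.gsubst σ r.rhs)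
  | conCtx {c ts₁ t t' ts₂} : XStep Rs t t' →
      XStep Rs (GTerm.con c (ts₁ ++ t :: ts₂)) (GTerm.con c (ts₁ ++ t' :: ts₂))
  | fnCtx {f ts₁ t t' ts₂} : XStep Rs t t' →
      XStep Rs (GTerm.fn f (ts₁ ++ t :: ts₂)) (GTerm.fn f (ts₁ ++ t' :: ts₂))

/-- Normal forms of the rewrite system. -/
def XNormal {C F : Type} (Rs : Set (GRule C F)) (t : GTerm C F) : Prop :=
  ¬ ∃ u, XStep Rs t u

/-- Closed terms: no variables. -/
def GClosed {C F : Type} (t : GTerm C F) : Prop := t.varsL = []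

open scoped Classical

/-- A term graph over a signature with constructors `C` and function symbols `F`:
a finite set of vertices (natural numbers), a partial labelling, an ordered list of
successors for every vertex (empty for unlabelled vertices), and a root. -/
structure TermGraph (C F : Type) where
  V : Finset ℕ
  lab : ℕ → Option (C ⊕ F)
  succ : ℕ → List ℕ
  root : ℕ

namespace TermGraph

variable {C F : Type}

/-- The arity of a symbol. -/
def arity (arc : C → ℕ) (arf : F → ℕ) : C ⊕ F → ℕ := Sum.elim arc arf

/-- The edge relation of a graph. -/
def edge (G : TermGraph C F) (a b : ℕ) : Prop := a ∈ G.V ∧ b ∈ G.succ a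

/-- Reachability in a graph. -/
def Reach (G : TermGraph C F) (a b : ℕ) : Prop := Relation.ReflTransGen G.edge a b

/-- Well-formed graphs: the root is a vertex, edges stay inside the vertex set,
the out-degree of every vertex matches the arity of its label (0 if unlabelled),
and the graph is acyclic. -/
structure WFG (arc : C → ℕ) (arf : F → ℕ) (G : TermGraph C F) : Prop where
  root_mem : G.root ∈ G.V
  succ_mem : ∀ v ∈ G.V, ∀ w ∈ G.succ v, w ∈ G.V
  arity_ok : ∀ v ∈ G.V, (G.succ v).length = ((G.lab v).map (arity arc arf)).getD 0
  acyclic : ∀ v, ¬ Relation.TransGen G.edge v v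

/-- A graph is closed if its labelling is total on vertices. -/
def ClosedG (G : TermGraph C F) : Prop := ∀ v ∈ G.V, (G.lab v).isSome

/-- Follow a path (a list of child indices) from a vertex. -/
def follow (G : TermGraph C F) : ℕ → List ℕ → Option ℕ
  | v, [] => some v
  | v, i :: is => ((G.succ v)[i]?).bind (fun w => follow G w is)

/-- A graph is constructor-shared if every vertex reachable from the root by two
distinct paths only reaches constructor-labelled vertices. -/
def ConstructorShared (G : TermGraph C F) : Prop :=
  ∀ v (p q : List ℕ), follow G G.root p = some v → follow G G.root q = some v →
    p ≠ q → ∀ w, G.Reach v w → ∃ c, G.lab w = some (Sum.inl c)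

/-- `Unfolds G v t`: the (closed) term `t` is the unfolding of the graph `G`
at vertex `v`. -/
inductive Unfolds (G : TermGraph C F) : ℕ → GTerm C F → Prop
  | con {v : ℕ} {c : C} {ts : List (GTerm C F)} :
      G.lab v = some (Sum.inl c) → (G.succ v).length = ts.length →
      (∀ (j : ℕ) (h : j < ts.length), Unfolds G ((G.succ v).getD j 0) ts[j]) →
      Unfolds G v (GTerm.con c ts)
  | fn {v : ℕ} {f : F} {ts : List (GTerm C F)} :
      G.lab v = some (Sum.inr f) → (G.succ v).length = ts.length →
      (∀ (j : ℕ) (h : j < ts.length), Unfolds G ((G.succ v).getD j 0) ts[j]) →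
      Unfolds G v (GTerm.fn f ts)

/-- A homomorphism from the subgraph of `H` rooted at `l` into `G`. -/
def IsHom (H : TermGraph C F) (l : ℕ) (G : TermGraph C F) (φ : ℕ → ℕ) : Prop :=
  ∀ v, H.Reach l v → φ v ∈ G.V ∧
    ∀ a, H.lab v = some a →
      G.lab (φ v) = some a ∧ G.succ (φ v) = (H.succ v).map φ

/-- A redex in `G` for a rule graph `(H, l, r)`: a homomorphism from the subgraph of
`H` rooted at `l` into `G` such that every path starting at the image of an
unlabelled (variable) node is a constructor path. -/
def IsRedex (H : TermGraph C F) (l : ℕ) (G : TermGraph C F) (φ : ℕ → ℕ) : Prop :=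
  IsHom H l G φ ∧
  ∀ v, H.Reach l v → H.lab v = none →
    ∀ w, G.Reach (φ v) w → ∃ c, G.lab w = some (Sum.inl c)

/-- Firing a redex `(H, l, r, φ)` in `G`: the build phase copies the part of the
right-hand side subgraph not contained in the left-hand side subgraph (fresh
vertices are obtained by adding the offset `off`), the redirection phase redirects
all edges pointing to `φ l` towards (the copy of) `r` and re-roots if necessary,
and the garbage-collection phase keeps only the vertices reachable from the new
root. -/
noncomputable def fire (G : TermGraph C F) (H : TermGraph C F) (l r : ℕ) (φ : ℕ → ℕ) :
    TermGraph C F :=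
  let off := G.V.sup id + 1
  let ψ : ℕ → ℕ := fun v => if H.Reach l v then φ v else v + off
  let tgt := ψ r
  let rd : ℕ → ℕ := fun w => if w = φ l then tgt else w
  let copies := (H.V.filter (fun v => H.Reach r v ∧ ¬ H.Reach l v)).image (· + off)
  let lab1 : ℕ → Option (C ⊕ F) :=
    fun v => if v ∈ copies then H.lab (v - off) else G.lab v
  let succ1 : ℕ → List ℕ :=
    fun v => if v ∈ copies then ((H.succ (v - off)).map ψ).map rd
             else (G.succ v).map rd
  let root1 := rd G.root
  let V1 := G.V ∪ copies
  { V := V1.filter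
      (fun v => Relation.ReflTransGen (fun a b => a ∈ V1 ∧ b ∈ succ1 a) root1 v),
    lab := lab1, succ := succ1, root := root1 }

end TermGraph

/-- State of the tree-graph builder. -/
structure GB (C F : Type) where
  next : ℕ
  lab : ℕ → Option (C ⊕ F)
  succ : ℕ → List ℕ

mutual
/-- Build the tree of a term on top of a builder state, the (already allocated)
node `vm x` standing for the variable `x`; returns the root of the new tree. -/
def buildT {C F : Type} (vm : ℕ → ℕ) : GTerm C F → GB C F → ℕ × GB C F
  | .var x, s => (vm x, s)
  | .con c ts, s =>
      let p := buildL vm ts s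
      (p.2.next,
        ⟨p.2.next + 1,
         fun v => if v = p.2.next then some (Sum.inl c) else p.2.lab v,
         fun v => if v = p.2.next then p.1 else p.2.succ v⟩)
  | .fn f ts, s =>
      let p := buildL vm ts s
      (p.2.next,
        ⟨p.2.next + 1,
         fun v => if v = p.2.next then some (Sum.inr f) else p.2.lab v,
         fun v => if v = p.2.next then p.1 else p.2.succ v⟩)

def buildL {C F : Type} (vm : ℕ → ℕ) : List (GTerm C F) → GB C F → List ℕ × GB C F
  | [], s => ([], s)
  | t :: ts, s =>
      let p := buildT vm t s
      let q := buildL vm ts p.2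
      (p.1 :: q.1, q.2)
end

/-- The term graph of a term: one unlabelled node for each variable (shared), and
a fresh node for every other symbol occurrence.  For a closed term this is the
tree term graph 𝔾(t). -/
def graphOfTerm {C F : Type} (t : GTerm C F) : TermGraph C F :=
  let vs := t.varsL.dedup
  let vm : ℕ → ℕ := fun x => vs.idxOf x
  let p := buildT vm t ⟨vs.length, fun _ => none, fun _ => []⟩
  { V := Finset.range p.2.next, lab := p.2.lab, succ := p.2.succ, root := p.1 }

/-- The graph rewrite rule corresponding to a term rewrite rule: the trees of the
left- and right-hand sides, sharing the nodes representing the same variable.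
Returns the rule graph together with its left and right roots. -/
def ruleGraph {C F : Type} (r : GRule C F) : TermGraph C F × ℕ × ℕ :=
  let lhs : GTerm C F := GTerm.fn r.f r.args
  let vs := lhs.varsL.dedup
  let vm : ℕ → ℕ := fun x => vs.idxOf x
  let p := buildT vm lhs ⟨vs.length, fun _ => none, fun _ => []⟩
  let q := buildT vm r.rhs p.2
  ({ V := Finset.range q.2.next, lab := q.2.lab, succ := q.2.succ, root := p.1 },
   p.1, q.1)

/-- One-step graph rewriting in the graph rewrite system corresponding to the
rules `Rs`. -/
inductive GStep {C F : Type} (Rs : Set (GRule C F)) : TermGraph C F → TermGraph C F → Prop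
  | mk {G : TermGraph C F} {r : GRule C F} {φ : ℕ → ℕ} :
      r ∈ Rs →
      TermGraph.IsRedex (ruleGraph r).1 (ruleGraph r).2.1 G φ →
      GStep Rs G (TermGraph.fire G (ruleGraph r).1 (ruleGraph r).2.1 (ruleGraph r).2.2 φ)

/-- Graph normal forms: no redex can be fired. -/
def GNormal {C F : Type} (Rs : Set (GRule C F)) (G : TermGraph C F) : Prop :=
  ¬ ∃ I, GStep Rs G I

/-- The signature of Φ: a constructor c_{x,M} for every variable x and λ-term M
(of arity the number of free variables of λx.M), and a single binary function
symbol app. -/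
abbrev PhiC : Type := ℕ × Lam
abbrev PhiF : Type := Unit

/-- Arities of the constructors of Φ. -/
def phiArc : PhiC → ℕ := fun p => (Lam.fvList (Lam.lam p.1 p.2)).length

/-- Arity of the function symbol app of Φ. -/
def phiArf : PhiF → ℕ := fun _ => 2

/-- The translation ⟨·⟩ from λ-terms to Φ-terms. -/
def transG : Lam → GTerm PhiC PhiF
  | .var x => .var x
  | .lam x M => .con (x, M) ((Lam.fvList (.lam x M)).map .var)
  | .app M N => .fn () [transG M, transG N]

/-- The rewrite rules of Φ: app(c_{x,M}(x₁,…,xₙ), x) → ⟨M⟩ where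
FV(λx.M) = x₁,…,xₙ. -/
def PhiGRules : Set (GRule PhiC PhiF) :=
  { r | ∃ (x : ℕ) (M : Lam),
      r = ⟨(), [GTerm.con (x, M) ((Lam.fvList (.lam x M)).map GTerm.var),
            GTerm.var x], transG M⟩ }

section Aux

open GTerm

variable {C F : Type}

/-- Symbols of a term satisfy a predicate. -/
inductive SymP (P : C ⊕ F → Prop) : GTerm C F → Prop
  | var {x} : SymP P (.var x)
  | con {c ts} : P (.inl c) → (∀ t ∈ ts, SymP P t) → SymP P (.con c ts)
  | fn {f ts} : P (.inr f) → (∀ t ∈ ts, SymP P t) → SymP P (.fn f ts)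

theorem SymP.mono {P Q : C ⊕ F → Prop} (h : ∀ a, P a → Q a) {t : GTerm C F}
    (ht : SymP P t) : SymP Q t := by
  induction ht with
  | var => exact .var
  | con hc _ ih => exact .con (h _ hc) ih
  | fn hf _ ih => exact .fn (h _ hf) ih

mutual
theorem buildT_next_mono (vm : ℕ → ℕ) (t : GTerm C F) (s : GB C F) :
    s.next ≤ (buildT vm t s).2.next := by
  cases t with
  | var x => simp [buildT]
  | con c ts =>
    have := buildL_next_mono vm ts s
    simp only [buildT]; omega
  | fn f ts =>
    have := buildL_next_mono vm ts s
    simp only [buildT]; omega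

theorem buildL_next_mono (vm : ℕ → ℕ) (ts : List (GTerm C F)) (s : GB C F) :
    s.next ≤ (buildL vm ts s).2.next := by
  cases ts with
  | nil => simp [buildL]
  | cons t ts =>
    have h1 := buildT_next_mono vm t s
    have h2 := buildL_next_mono vm ts (buildT vm t s).2
    simp only [buildL]; omega
end

mutual
theorem buildT_preserve (vm : ℕ → ℕ) (t : GTerm C F) (s : GB C F) (v : ℕ)
    (hv : v < s.next) :
    (buildT vm t s).2.lab v = s.lab v ∧ (buildT vm t s).2.succ v = s.succ v := by
  cases t with
  | var x => simp [buildT]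
  | con c ts =>
    have h1 := buildL_next_mono vm ts s
    have h2 := buildL_preserve vm ts s v hv
    have hne : v ≠ (buildL vm ts s).2.next := by omega
    simp only [buildT]
    simpa [hne] using h2
  | fn f ts =>
    have h1 := buildL_next_mono vm ts s
    have h2 := buildL_preserve vm ts s v hv
    have hne : v ≠ (buildL vm ts s).2.next := by omega
    simp only [buildT]
    simpa [hne] using h2

theorem buildL_preserve (vm : ℕ → ℕ) (ts : List (GTerm C F)) (s : GB C F) (v : ℕ)
    (hv : v < s.next) :
    (buildL vm ts s).2.lab v = s.lab v ∧ (buildL vm ts s).2.succ v = s.succ v := by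
  cases ts with
  | nil => simp [buildL]
  | cons t ts =>
    have h1 := buildT_next_mono vm t s
    have h2 := buildT_preserve vm t s v hv
    have h3 := buildL_preserve vm ts (buildT vm t s).2 v (by omega)
    simp only [buildL]
    exact ⟨h3.1.trans h2.1, h3.2.trans h2.2⟩
end

mutual
theorem buildT_lab (P : C ⊕ F → Prop) (vm : ℕ → ℕ) (t : GTerm C F) (s : GB C F)
    (hs : ∀ v a, s.lab v = some a → P a) (ht : SymP P t) :
    ∀ v a, (buildT vm t s).2.lab v = some a → P a := by
  cases t with
  | var x => simpa [buildT] using hs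
  | con c ts =>
    cases ht with
    | con hc hts =>
      intro v a
      simp only [buildT]
      by_cases hv : v = (buildL vm ts s).2.next
      · simp only [hv, if_pos rfl]
        rintro ⟨rfl⟩
        exact hc
      · simp only [if_neg hv]
        exact buildL_lab P vm ts s hs hts v a
  | fn f ts =>
    cases ht with
    | fn hf hts =>
      intro v a
      simp only [buildT]
      by_cases hv : v = (buildL vm ts s).2.next
      · simp only [hv, if_pos rfl]
        rintro ⟨rfl⟩
        exact hf
      · simp only [if_neg hv]
        exact buildL_lab P vm ts s hs hts v a

theorem buildL_lab (P : C ⊕ F → Prop) (vm : ℕ → ℕ) (ts : List (GTerm C F)) (s : GB C F)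
    (hs : ∀ v a, s.lab v = some a → P a) (hts : ∀ t ∈ ts, SymP P t) :
    ∀ v a, (buildL vm ts s).2.lab v = some a → P a := by
  cases ts with
  | nil => simpa [buildL] using hs
  | cons t ts =>
    simp only [buildL]
    exact buildL_lab P vm ts (buildT vm t s).2
      (buildT_lab P vm t s hs (hts t (by simp)))
      (fun u hu => hts u (by simp [hu]))
end

theorem buildL_map_var (vm : ℕ → ℕ) (ys : List ℕ) (s : GB C F) :
    buildL vm (ys.map GTerm.var) s = (ys.map vm, s) := by
  induction ys generalizing s with
  | nil => simp [buildL]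
  | cons y ys ih => simp [buildL, buildT, ih]

end Aux

section Aux2

theorem buildT_transG_next (vm : ℕ → ℕ) (P : Lam) (s : GB PhiC PhiF) :
    (buildT vm (transG P) s).2.next ≤ s.next + Lam.size P := by
  induction P generalizing s with
  | var x => simp [transG, buildT, Lam.size]
  | lam y M ih => simp [transG, buildT, buildL_map_var, Lam.size]
  | app M N ihM ihN =>
    have h1 := ihM s
    have h2 := ihN (buildT vm (transG M) s).2
    simp only [transG, buildT, buildL, Lam.size]
    omega

theorem varsL_con {C F : Type} (c : C) (ts : List (GTerm C F)) :
    GTerm.varsL (GTerm.con c ts) = ts.flatMap GTerm.varsL := by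
  rw [GTerm.varsL]; simp

theorem varsL_fn {C F : Type} (f : F) (ts : List (GTerm C F)) :
    GTerm.varsL (GTerm.fn f ts) = ts.flatMap GTerm.varsL := by
  rw [GTerm.varsL]; simp

theorem mem_varsL_transG {y : ℕ} {P : Lam} (h : y ∈ (transG P).varsL) : y ∈ Lam.fv P := by
  induction P with
  | var x => simpa [transG, GTerm.varsL, Lam.fv] using h
  | lam z M ih =>
    simp only [transG, varsL_con] at h
    rw [List.mem_flatMap] at h
    obtain ⟨t, ht, hy⟩ := h
    rw [List.mem_map] at ht
    obtain ⟨z', hz', rfl⟩ := ht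
    simp only [GTerm.varsL, List.mem_singleton] at hy
    subst hy
    rw [Lam.fvList, Finset.mem_sort] at hz'
    exact hz'
  | app M N ihM ihN =>
    simp only [transG, varsL_fn] at h
    rw [List.mem_flatMap] at h
    obtain ⟨t, ht, hy⟩ := h
    simp only [List.mem_cons, List.not_mem_nil, or_false, List.mem_singleton] at ht
    rcases ht with rfl | rfl
    · exact Finset.mem_union_left _ (ihM hy)
    · exact Finset.mem_union_right _ (ihN hy)

theorem varsL_transG_closed {P : Lam} (h : Lam.Closed P) : (transG P).varsL = [] := by
  rw [List.eq_nil_iff_forall_not_mem]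
  intro y hy
  have := mem_varsL_transG hy
  rw [Lam.Closed] at h
  simp [h] at this

theorem symP_transG (N : Lam) :
    SymP (fun a => ∀ y Q, a = Sum.inl (y, Q) → Lam.size Q + 1 ≤ Lam.size N) (transG N) := by
  induction N with
  | var x => exact .var
  | lam z M ih =>
    refine .con ?_ ?_
    · rintro y Q ⟨rfl⟩
      simp [Lam.size]
    · intro t ht
      rw [List.mem_map] at ht
      obtain ⟨_, _, rfl⟩ := ht
      exact .var
  | app M N ihM ihN =>
    refine .fn (by rintro y Q ⟨⟩) ?_
    intro t ht
    simp only [List.mem_cons, List.not_mem_nil, or_false, List.mem_singleton] at ht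
    rcases ht with rfl | rfl
    · exact ihM.mono (fun a ha y Q hq => by have := ha y Q hq; simp [Lam.size]; omega)
    · exact ihN.mono (fun a ha y Q hq => by have := ha y Q hq; simp [Lam.size]; omega)

end Aux2

section Aux3

/-- The rule of Φ for the abstraction λx.N. -/
def phiRule (x : ℕ) (N : Lam) : GRule PhiC PhiF :=
  ⟨(), [GTerm.con (x, N) ((Lam.fvList (Lam.lam x N)).map GTerm.var),
        GTerm.var x], transG N⟩

theorem mem_phiGRules {r : GRule PhiC PhiF} (h : r ∈ PhiGRules) :
    ∃ x N, r = phiRule x N := h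

def varsOf (x : ℕ) (N : Lam) : List ℕ := Lam.fvList (Lam.lam x N)
def kOf (x : ℕ) (N : Lam) : ℕ := (varsOf x N).length
def vmOf (x : ℕ) (N : Lam) : ℕ → ℕ := fun y => List.idxOf y (varsOf x N ++ [x])

theorem x_not_mem_varsOf (x : ℕ) (N : Lam) : x ∉ varsOf x N := by
  rw [varsOf, Lam.fvList, Finset.mem_sort]
  simp [Lam.fv]

theorem nodup_varsOf (x : ℕ) (N : Lam) : (varsOf x N).Nodup := Finset.sort_nodup _ _

theorem vmOf_x (x : ℕ) (N : Lam) : vmOf x N x = kOf x N := by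
  rw [vmOf, List.idxOf_append_of_notMem (x_not_mem_varsOf x N)]
  simp [kOf]

theorem mem_map_vmOf (x : ℕ) (N : Lam) (i : ℕ) (hi : i < kOf x N) :
    i ∈ (varsOf x N).map (vmOf x N) := by
  refine List.mem_map.mpr ⟨(varsOf x N)[i]'hi, List.getElem_mem _, ?_⟩
  rw [vmOf]
  exact (List.idxOf_append_of_mem (List.getElem_mem _)).trans
    (List.Nodup.idxOf_getElem (nodup_varsOf x N) i hi)

theorem phi_lhs_varsL (x : ℕ) (N : Lam) :
    (GTerm.fn () (phiRule x N).args).varsL = varsOf x N ++ [x] := by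
  simp only [phiRule, varsL_fn, varsL_con, List.flatMap_cons, List.flatMap_nil, varsOf]
  rw [List.flatMap_map]
  simp [GTerm.varsL]

theorem phi_lhs_dedup (x : ℕ) (N : Lam) :
    (GTerm.fn () (phiRule x N).args).varsL.dedup = varsOf x N ++ [x] := by
  rw [phi_lhs_varsL, List.dedup_eq_self.mpr]
  simp only [List.nodup_append, List.nodup_singleton, true_and]
  exact ⟨nodup_varsOf x N, by simpa using fun a (ha : a ∈ varsOf x N) (h : a = x) => x_not_mem_varsOf x N (by rwa [h] at ha)⟩

end Aux3

section Aux4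

theorem phi_build_lhs (x : ℕ) (N : Lam) :
    buildT (vmOf x N) (GTerm.fn () (phiRule x N).args)
      ⟨kOf x N + 1, fun _ => none, fun _ => []⟩ =
    (kOf x N + 2,
     ⟨kOf x N + 3,
      fun v => if v = kOf x N + 2 then some (Sum.inr ()) else
               if v = kOf x N + 1 then some (Sum.inl (x, N)) else none,
      fun v => if v = kOf x N + 2 then [kOf x N + 1, vmOf x N x] else
               if v = kOf x N + 1 then (varsOf x N).map (vmOf x N) else []⟩) := by
  simp only [phiRule, buildT, buildL, buildL_map_var, varsOf]

end Aux4

section Aux5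

theorem buildT_next_mono' {C F : Type} (vm : ℕ → ℕ) (t : GTerm C F) (s : GB C F) {n : ℕ}
    (hn : s.next = n) : n ≤ (buildT vm t s).2.next := hn ▸ buildT_next_mono vm t s

theorem buildT_transG_next' (vm : ℕ → ℕ) (P : Lam) (s : GB PhiC PhiF) {n : ℕ}
    (hn : s.next = n) : (buildT vm (transG P) s).2.next ≤ n + Lam.size P :=
  hn ▸ buildT_transG_next vm P s

/-- The builder state after building both sides of the rule graph of λx.N. -/
def qState (x : ℕ) (N : Lam) : ℕ × GB PhiC PhiF :=
  buildT (vmOf x N) (transG N)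
    ⟨kOf x N + 3,
     fun v => if v = kOf x N + 2 then some (Sum.inr ()) else
              if v = kOf x N + 1 then some (Sum.inl (x, N)) else none,
     fun v => if v = kOf x N + 2 then [kOf x N + 1, vmOf x N x] else
              if v = kOf x N + 1 then (varsOf x N).map (vmOf x N) else []⟩

theorem phi_rg (x : ℕ) (N : Lam) :
    ruleGraph (phiRule x N) =
    ({ V := Finset.range (qState x N).2.next, lab := (qState x N).2.lab,
       succ := (qState x N).2.succ, root := kOf x N + 2 },
     kOf x N + 2, (qState x N).1) := by
  have hd := phi_lhs_dedup x N
  have hlen : (varsOf x N ++ [x]).length = kOf x N + 1 := by simp [kOf]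
  have hb := phi_build_lhs x N
  simp only [ruleGraph, hd, hlen]
  rw [show (fun y => (varsOf x N ++ [x]).idxOf y) = vmOf x N from rfl]
  rw [hb]
  simp only [phiRule, qState]

theorem phi_Q_ge (x : ℕ) (N : Lam) : kOf x N + 3 ≤ (qState x N).2.next := by
  rw [qState]; exact buildT_next_mono' _ _ _ rfl

theorem phi_Q_le (x : ℕ) (N : Lam) :
    (qState x N).2.next ≤ kOf x N + 3 + Lam.size N := by
  rw [qState]; exact buildT_transG_next' _ _ _ rfl

theorem phi_H_lab_k1 (x : ℕ) (N : Lam) :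
    (ruleGraph (phiRule x N)).1.lab (kOf x N + 1) = some (Sum.inl (x, N)) := by
  rw [phi_rg]
  show (qState x N).2.lab _ = _
  rw [qState,(buildT_preserve _ _ _ _ (by omega : kOf x N + 1 < kOf x N + 3)).1]
  simp

theorem phi_H_succ_k2 (x : ℕ) (N : Lam) :
    (ruleGraph (phiRule x N)).1.succ (kOf x N + 2) = [kOf x N + 1, kOf x N] := by
  rw [phi_rg]
  show (qState x N).2.succ _ = _
  rw [qState,(buildT_preserve _ _ _ _ (by omega : kOf x N + 2 < kOf x N + 3)).2]
  simp [vmOf_x]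

theorem phi_H_succ_k1 (x : ℕ) (N : Lam) :
    (ruleGraph (phiRule x N)).1.succ (kOf x N + 1) = (varsOf x N).map (vmOf x N) := by
  rw [phi_rg]
  show (qState x N).2.succ _ = _
  rw [qState,(buildT_preserve _ _ _ _ (by omega : kOf x N + 1 < kOf x N + 3)).2]
  simp

theorem phi_H_lab_bound (x : ℕ) (N : Lam) :
    ∀ w a, (ruleGraph (phiRule x N)).1.lab w = some a →
      ∀ y Q, a = Sum.inl (y, Q) → Lam.size Q ≤ Lam.size N := by
  rw [phi_rg]
  intro w a hw
  refine buildT_lab (fun a => ∀ y Q, a = Sum.inl (y, Q) → Lam.size Q ≤ Lam.size N)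
    _ _ _ ?_ ?_ w a hw
  · intro v b hb
    dsimp only at hb
    split at hb
    · simp only [Option.some.injEq] at hb; subst hb; rintro y Q ⟨⟩
    · split at hb
      · simp only [Option.some.injEq] at hb; subst hb
        intro y Q h
        injection h with h2
        rw [Prod.mk.injEq] at h2
        rcases h2 with ⟨rfl, rfl⟩
        exact le_rfl
      · cases hb
  · exact (symP_transG N).mono (fun a ha y Q hq => by have := ha y Q hq; omega)

theorem phi_reach (x : ℕ) (N : Lam) :
    ∀ v < kOf x N + 3, (ruleGraph (phiRule x N)).1.Reach (kOf x N + 2) v := by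
  set k := kOf x N with hk
  have hV : ∀ u, u < k + 3 → u ∈ (ruleGraph (phiRule x N)).1.V := by
    intro u hu
    rw [phi_rg]
    have := phi_Q_ge x N
    simp only [Finset.mem_range]
    omega
  have e1 : (ruleGraph (phiRule x N)).1.edge (k + 2) (k + 1) :=
    ⟨hV _ (by omega), by rw [phi_H_succ_k2]; simp [hk]⟩
  have e2 : (ruleGraph (phiRule x N)).1.edge (k + 2) k :=
    ⟨hV _ (by omega), by rw [phi_H_succ_k2]; simp [hk]⟩
  have e3 : ∀ i, i < k → (ruleGraph (phiRule x N)).1.edge (k + 1) i := by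
    intro i hi
    exact ⟨hV _ (by omega), by rw [phi_H_succ_k1]; exact mem_map_vmOf x N i hi⟩
  intro v hv
  rcases Nat.lt_or_ge v k with h | h
  · exact Relation.ReflTransGen.tail (Relation.ReflTransGen.single e1) (e3 v h)
  · have : v = k ∨ v = k + 1 ∨ v = k + 2 := by omega
    rcases this with rfl | rfl | rfl
    · exact Relation.ReflTransGen.single e2
    · exact Relation.ReflTransGen.single e1
    · exact Relation.ReflTransGen.refl

end Aux5

section Aux6

def offOf (G : TermGraph PhiC PhiF) : ℕ := G.V.sup id + 1

noncomputable def copiesOf (G H : TermGraph PhiC PhiF) (l rr : ℕ) : Finset ℕ :=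
  (H.V.filter (fun v => H.Reach rr v ∧ ¬ H.Reach l v)).image (· + offOf G)

theorem fire_lab (G H : TermGraph PhiC PhiF) (l rr : ℕ) (φ : ℕ → ℕ) :
    (TermGraph.fire G H l rr φ).lab =
    fun v => if v ∈ copiesOf G H l rr then H.lab (v - offOf G) else G.lab v := rfl

theorem fire_V_subset (G H : TermGraph PhiC PhiF) (l rr : ℕ) (φ : ℕ → ℕ) :
    (TermGraph.fire G H l rr φ).V ⊆ G.V ∪ copiesOf G H l rr :=
  Finset.filter_subset _ _

def InvB (B : ℕ) (G : TermGraph PhiC PhiF) : Prop :=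
  ∀ v (p : PhiC), G.lab v = some (Sum.inl p) → Lam.size p.2 < B

theorem step_bound {B : ℕ} {G G' : TermGraph PhiC PhiF} (hInv : InvB B G)
    (h : GStep PhiGRules G G') : InvB B G' ∧ G'.V.card ≤ G.V.card + B := by
  cases h with
  | @mk r φ hr hred =>
  obtain ⟨x, N, rfl⟩ := mem_phiGRules hr
  have hl : (ruleGraph (phiRule x N)).2.1 = kOf x N + 2 := by rw [phi_rg]
  have hreach1 : (ruleGraph (phiRule x N)).1.Reach (ruleGraph (phiRule x N)).2.1
      (kOf x N + 1) := by
    rw [hl]; exact phi_reach x N _ (by omega)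
  have hGlab := ((hred.1 (kOf x N + 1) hreach1).2 _ (phi_H_lab_k1 x N)).1
  have hN : Lam.size N < B := hInv _ _ hGlab
  refine ⟨?_, ?_⟩
  · intro v p hp
    rw [fire_lab] at hp
    dsimp only at hp
    split at hp
    · exact lt_of_le_of_lt (phi_H_lab_bound x N _ _ hp _ _ rfl) hN
    · exact hInv _ _ hp
  · have h1 := Finset.card_le_card (fire_V_subset G (ruleGraph (phiRule x N)).1
      (ruleGraph (phiRule x N)).2.1 (ruleGraph (phiRule x N)).2.2 φ)
    have h2 := Finset.card_union_le G.V (copiesOf G (ruleGraph (phiRule x N)).1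
      (ruleGraph (phiRule x N)).2.1 (ruleGraph (phiRule x N)).2.2)
    have h3 : (copiesOf G (ruleGraph (phiRule x N)).1 (ruleGraph (phiRule x N)).2.1
        (ruleGraph (phiRule x N)).2.2).card ≤
        ((ruleGraph (phiRule x N)).1.V.filter
          (fun v => (ruleGraph (phiRule x N)).1.Reach (ruleGraph (phiRule x N)).2.2 v ∧
            ¬ (ruleGraph (phiRule x N)).1.Reach (ruleGraph (phiRule x N)).2.1 v)).card :=
      Finset.card_image_le
    have h4 : ((ruleGraph (phiRule x N)).1.V.filter
          (fun v => (ruleGraph (phiRule x N)).1.Reach (ruleGraph (phiRule x N)).2.2 v ∧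
            ¬ (ruleGraph (phiRule x N)).1.Reach (ruleGraph (phiRule x N)).2.1 v)) ⊆
        Finset.Ico (kOf x N + 3) (qState x N).2.next := by
      intro w hw
      rw [Finset.mem_filter] at hw
      obtain ⟨hwV, _, hwl⟩ := hw
      have hwQ : w < (qState x N).2.next := by
        have : (ruleGraph (phiRule x N)).1.V = Finset.range (qState x N).2.next := by
          rw [phi_rg]
        rw [this, Finset.mem_range] at hwV
        exact hwV
      rw [Finset.mem_Ico]
      refine ⟨?_, hwQ⟩
      by_contra hlt
      exact hwl (hl ▸ phi_reach x N w (by omega))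
    have h5 := Finset.card_le_card h4
    rw [Nat.card_Ico] at h5
    have h6 := phi_Q_le x N
    omega

theorem graphOfTerm_lab (t : GTerm PhiC PhiF) :
    (graphOfTerm t).lab =
    (buildT (fun x => t.varsL.dedup.idxOf x) t
      ⟨t.varsL.dedup.length, fun _ => none, fun _ => []⟩).2.lab := rfl

theorem graphOfTerm_V (t : GTerm PhiC PhiF) :
    (graphOfTerm t).V =
    Finset.range (buildT (fun x => t.varsL.dedup.idxOf x) t
      ⟨t.varsL.dedup.length, fun _ => none, fun _ => []⟩).2.next := rfl

theorem base_card (M : Lam) (hM : Lam.Closed M) :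
    (graphOfTerm (transG M)).V.card ≤ Lam.size M := by
  rw [graphOfTerm_V, Finset.card_range]
  refine le_trans (buildT_transG_next' _ _ _ rfl) ?_
  simp [varsL_transG_closed hM]

theorem base_inv (M : Lam) : InvB (Lam.size M) (graphOfTerm (transG M)) := by
  intro v p hp
  rw [graphOfTerm_lab] at hp
  have := buildT_lab (fun a => ∀ y Q, a = Sum.inl (y, Q) → Lam.size Q + 1 ≤ Lam.size M)
    _ (transG M) _ (fun _ _ h => by cases h) (symP_transG M) v _ hp p.1 p.2 rfl
  omega

end Aux6

/-- For every closed λ-term M, if the tree term graph 𝔾(⟨M⟩) rewrites in n steps of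
the graph rewrite system corresponding to Φ to a term graph G, then G has at most
(n+1)·|M| vertices. -/
theorem graph_size_bound (M : Lam) (n : ℕ) (G : TermGraph PhiC PhiF)
    (hM : Lam.Closed M)
    (h : NSteps (GStep PhiGRules) n (graphOfTerm (transG M)) G) :
    G.V.card ≤ (n + 1) * Lam.size M := by
  have aux : ∀ m (G0 Gm : TermGraph PhiC PhiF), InvB (Lam.size M) G0 →
      NSteps (GStep PhiGRules) m G0 Gm →
      InvB (Lam.size M) Gm ∧ Gm.V.card ≤ G0.V.card + m * Lam.size M := by
    intro m
    induction m with
    | zero =>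
      intro G0 Gm hi h
      obtain rfl : G0 = Gm := h
      simpa using hi
    | succ m ih =>
      intro G0 Gm hi h
      obtain ⟨G1, h1, h2⟩ := h
      have s1 := step_bound hi h1
      have s2 := ih G1 Gm s1.1 h2
      refine ⟨s2.1, ?_⟩
      have hmul : (m + 1) * Lam.size M = m * Lam.size M + Lam.size M := by ring
      rw [hmul]
      have := s1.2
      have := s2.2
      omega
  have hfinal := (aux n _ G (base_inv M) h).2
  have hc := base_card M hM
  have hmul : (n + 1) * Lam.size M = n * Lam.size M + Lam.size M := by ring
  rw [hmul]
  omega
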